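/- (Theorem 2, necessity direction) Let x : ℕ → ℝⁿ satisfy x(k+1) = A·x(0) + W·x(k) for all k ∈ ℕ, set L := A + W − I, and fix m ≥ 1 with data matrices P and Q. If an n×n real matrix W̄ satisfies W̄·P = Q, then (W̄ − W)·W^k·L·x(0) = 0 for every k ∈ {0, 1, …, m−1}; consequently, setting Ā := A − (W̄ − W), the sequence x also satisfies x(k+1) = Ā·x(0) + W̄·x(k) for every k ∈ {0, 1, …, m−1}. -/

import Mathlib

open Matrix

lemma my_mul_vecMulVec {n : ℕ} (M : Matrix (Fin n) (Fin n) ℝ) (a b : Fin n → ℝ) :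
    M * Matrix.vecMulVec a b = Matrix.vecMulVec (M.mulVec a) b := by
  ext i j
  simp only [Matrix.mul_apply, Matrix.vecMulVec_apply, Matrix.mulVec, dotProduct,
    Finset.sum_mul]
  apply Finset.sum_congr rfl
  intros; ring

lemma my_vecMulVec_mul_transpose {n : ℕ} (M : Matrix (Fin n) (Fin n) ℝ) (a b : Fin n → ℝ) :
    Matrix.vecMulVec a b * Mᵀ = Matrix.vecMulVec a (M.mulVec b) := by
  ext i j
  simp only [Matrix.mul_apply, Matrix.vecMulVec_apply, Matrix.mulVec, dotProduct,
    Matrix.transpose_apply]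
  rw [Finset.mul_sum]
  apply Finset.sum_congr rfl
  intros; ring

/-- Theorem 2 (necessity): if W̄·P = Q, then (W̄ − W)·W^k·L·x(0) = 0 for all
k ∈ {0, …, m−1}, and with Ā := A − (W̄ − W) the sequence x also satisfies
x(k+1) = Ā·x(0) + W̄·x(k) for every k ∈ {0, …, m−1}. -/
theorem theorem2_necessity (n m : ℕ) (hm : 1 ≤ m)
    (A W : Matrix (Fin n) (Fin n) ℝ) (x : ℕ → Fin n → ℝ)
    (hdyn : ∀ k : ℕ, x (k + 1) = A.mulVec (x 0) + W.mulVec (x k))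
    (L : Matrix (Fin n) (Fin n) ℝ) (hL : L = A + W - 1)
    (P Q : Matrix (Fin n) (Fin n) ℝ)
    (hP : P = ∑ k ∈ Finset.range m,
      Matrix.vecMulVec (x (k + 1) - x k) (x (k + 1) - x k))
    (hQ : Q = ∑ k ∈ Finset.range m,
      Matrix.vecMulVec (x (k + 2) - x (k + 1)) (x (k + 1) - x k))
    (W' : Matrix (Fin n) (Fin n) ℝ) (hW' : W' * P = Q) :
    (∀ k < m, ((W' - W) * W ^ k * L).mulVec (x 0) = 0) ∧
      (∀ k < m, x (k + 1) =
        (A - (W' - W)).mulVec (x 0) + W'.mulVec (x k)) := by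
  set M := W' - W with hM
  set d : ℕ → Fin n → ℝ := fun k => x (k + 1) - x k with hdDef
  have hd0 : d 0 = L.mulVec (x 0) := by
    simp only [hdDef, hL]
    rw [hdyn 0, Matrix.sub_mulVec, Matrix.add_mulVec, Matrix.one_mulVec]
  have hdstep : ∀ k, d (k + 1) = W.mulVec (d k) := by
    intro k
    simp only [hdDef]
    rw [hdyn (k + 1), hdyn k, Matrix.mulVec_sub]
    abel
  have hdW : ∀ k, d k = (W ^ k * L).mulVec (x 0) := by
    intro k
    induction k with
    | zero => simpa using hd0
    | succ k ih =>
      rw [hdstep k, ih, Matrix.mulVec_mulVec, ← mul_assoc, ← pow_succ']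
  have hQW : Q = W * P := by
    rw [hQ, hP, Finset.mul_sum]
    apply Finset.sum_congr rfl
    intro k _
    rw [my_mul_vecMulVec,
      show x (k + 2) - x (k + 1) = W.mulVec (x (k + 1) - x k) from hdstep k]
  have hMP : M * P = 0 := by
    rw [hM, sub_mul, hW', hQW, sub_self]
  have hsum : ∑ k ∈ Finset.range m,
      Matrix.vecMulVec (M.mulVec (d k)) (M.mulVec (d k)) = 0 := by
    have : M * P * Mᵀ = 0 := by rw [hMP, Matrix.zero_mul]
    rw [hP, Finset.mul_sum, Finset.sum_mul] at this
    rw [← this]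
    apply Finset.sum_congr rfl
    intro k _
    rw [my_mul_vecMulVec, my_vecMulVec_mul_transpose]
  have hzero : ∀ k < m, M.mulVec (d k) = 0 := by
    intro k hk
    funext i
    have h1 := congrFun (congrFun hsum i) i
    rw [Matrix.sum_apply, Matrix.zero_apply] at h1
    simp only [Finset.sum_apply, Matrix.vecMulVec_apply] at h1
    have h2 := (Finset.sum_eq_zero_iff_of_nonneg
      (fun j _ => mul_self_nonneg (M.mulVec (d j) i))).mp h1 k (Finset.mem_range.mpr hk)
    exact mul_self_eq_zero.mp h2
  have hpart1 : ∀ k < m, ((W' - W) * W ^ k * L).mulVec (x 0) = 0 := by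
    intro k hk
    rw [← hM, mul_assoc, ← Matrix.mulVec_mulVec, ← hdW k]
    exact hzero k hk
  refine ⟨hpart1, ?_⟩
  intro k hk
  have hxk : M.mulVec (x k) = M.mulVec (x 0) := by
    have hs : x k - x 0 = ∑ j ∈ Finset.range k, d j :=
      (Finset.sum_range_sub (fun j => x j) k).symm
    have : M.mulVec (x k - x 0) = 0 := by
      rw [hs, ← Matrix.mulVecLin_apply, map_sum]
      apply Finset.sum_eq_zero
      intro j hj
      rw [Matrix.mulVecLin_apply]
      exact hzero j (lt_trans (Finset.mem_range.mp hj) hk)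
    rw [Matrix.mulVec_sub, sub_eq_zero] at this
    exact this
  have hW'eq : W' = M + W := by rw [hM]; abel
  rw [hdyn k, Matrix.sub_mulVec, hW'eq, Matrix.add_mulVec, hxk]
  abel
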